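/- For every real number h > 0, it holds that h·log(h) − h + 1 ≤ (1/(√e − 1)²) · (√h − 1)² · max{1, log h}. -/
import Mathlib

open Real

private lemma aux_exp_cubic {x : ℝ} (hx1 : -1 ≤ x) (hx0 : x ≤ 0) :
    1 + x + x^2/2 + x^3/6 - 5*x^4/96 ≤ Real.exp x := by
  have habs : |x| ≤ 1 := by rw [abs_le]; constructor <;> linarith
  have h := Real.exp_bound habs (n := 4) (by norm_num)
  have hsum : ∑ i ∈ Finset.range 4, x ^ i / (Nat.factorial i : ℝ) = 1 + x + x^2/2 + x^3/6 := by
    simp [Finset.sum_range_succ, Nat.factorial]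
    try ring
  have habs4 : |x| ^ 4 = x ^ 4 := by
    rw [← abs_pow, abs_of_nonneg (by positivity)]
  rw [hsum, habs4] at h
  have h2 := (abs_le.mp h).1
  norm_num [Nat.factorial] at h2
  nlinarith [h2]

private lemma aux_tanh {s : ℝ} (h1 : (0.65:ℝ) ≤ s) (h2 : s ≤ 1) :
    (s + 1) * Real.log s ≤ 2 * (s - 1) := by
  have hs : 0 < s := by linarith
  have hsx : Real.exp (Real.log s) = s := Real.exp_log hs
  have hx0 : Real.log s ≤ 0 := Real.log_nonpos (by linarith) h2
  set x := Real.log s with hxdef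
  have hx1 : (-0.44:ℝ) ≤ x := by
    by_contra hcon
    push_neg at hcon
    have hlt : Real.exp x < Real.exp (-0.44) := Real.exp_lt_exp.mpr hcon
    rw [hsx] at hlt
    have he44 : (20/13 : ℝ) ≤ Real.exp 0.44 := by
      have hle := Real.sum_le_exp_of_nonneg (x := (0.44:ℝ)) (by norm_num) 4
      have hsum : ∑ i ∈ Finset.range 4, (0.44:ℝ) ^ i / (Nat.factorial i : ℝ)
          = 1 + 0.44 + 0.44^2/2 + 0.44^3/6 := by
        simp [Finset.sum_range_succ, Nat.factorial]
        try ring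
      rw [hsum] at hle
      nlinarith [hle]
    have hinv : Real.exp (-0.44) ≤ 0.65 := by
      rw [Real.exp_neg]
      have h13 : (Real.exp 0.44)⁻¹ ≤ (20/13 : ℝ)⁻¹ :=
        inv_anti₀ (by norm_num) he44
      calc (Real.exp 0.44)⁻¹ ≤ (20/13 : ℝ)⁻¹ := h13
        _ ≤ 0.65 := by norm_num
    linarith
  have hcub := aux_exp_cubic (by linarith : (-1:ℝ) ≤ x) hx0
  rw [hsx] at hcub
  have hc1 : 0 ≤ (s - (1 + x + x^2/2 + x^3/6 - 5*x^4/96)) * (2 - x) :=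
    mul_nonneg (by linarith) (by linarith)
  have hc2 : 0 ≤ (-x) * x^2 := mul_nonneg (by linarith) (sq_nonneg x)
  have hc3 : 0 ≤ ((-x) * x^2) * (x + 0.44) := mul_nonneg hc2 (by linarith)
  have hc4 : 0 ≤ (x^2)^2 * (x + 0.44) := mul_nonneg (by positivity) (by linarith)
  nlinarith [hc1, hc2, hc3, hc4]

private lemma aux_sinh {s : ℝ} (h1 : (1:ℝ) ≤ s) :
    2 * s^2 * Real.log s ≤ s^3 - s := by
  have hs : 0 < s := by linarith
  rcases eq_or_lt_of_le h1 with rfl | h1'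
  · simp
  · have hx : 0 < Real.log s := Real.log_pos h1'
    have hsinh := Real.self_lt_sinh_iff.mpr hx
    rw [Real.sinh_eq, Real.exp_log hs, Real.exp_neg, Real.exp_log hs] at hsinh
    have h2 : s^2 * s⁻¹ = s := by
      field_simp
      try ring
    have key : 0 ≤ s^2 * ((s - s⁻¹)/2 - Real.log s) :=
      mul_nonneg (sq_nonneg s) (by linarith)
    nlinarith [key, h2]

private lemma aux_log32 : Real.log (3/2) ≤ (0.4056:ℝ) := by
  rw [Real.log_le_iff_le_exp (by norm_num)]
  have hle := Real.sum_le_exp_of_nonneg (x := (0.4056:ℝ)) (by norm_num) 5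
  have hsum : ∑ i ∈ Finset.range 5, (0.4056:ℝ) ^ i / (Nat.factorial i : ℝ)
      = 1 + 0.4056 + 0.4056^2/2 + 0.4056^3/6 + 0.4056^4/24 := by
    simp [Finset.sum_range_succ, Nat.factorial]
    try ring
  rw [hsum] at hle
  nlinarith [hle]

set_option maxHeartbeats 1000000 in
theorem stmt_0 (h : ℝ) (hh : 0 < h) :
    h * Real.log h - h + 1 ≤
      (1 / (Real.sqrt (Real.exp 1) - 1) ^ 2) * (Real.sqrt h - 1) ^ 2 *
        max 1 (Real.log h) := by
  set s := Real.sqrt h with hsdef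
  have hs : 0 < s := by rw [hsdef]; exact Real.sqrt_pos.mpr hh
  have hs2 : s ^ 2 = h := by rw [hsdef]; exact Real.sq_sqrt hh.le
  have hlogh : Real.log h = 2 * Real.log s := by
    rw [← hs2, Real.log_pow]; push_cast; ring
  set E := Real.sqrt (Real.exp 1) with hEdef
  have hEexp : Real.exp (1/2 : ℝ) = E := by rw [hEdef]; exact Real.exp_half 1
  have hE0 : 0 < E := by rw [hEdef]; exact Real.sqrt_pos.mpr (Real.exp_pos 1)
  have hEsq : E ^ 2 = Real.exp 1 := by rw [hEdef]; exact Real.sq_sqrt (Real.exp_pos 1).le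
  have hE1 : (1.6487212:ℝ) < E := by nlinarith [Real.exp_one_gt_d9, hEsq, hE0]
  have hE2 : E < (1.6487213:ℝ) := by nlinarith [Real.exp_one_lt_d9, hEsq, hE0]
  have hlogE : Real.log E = 1/2 := by rw [← hEexp, Real.log_exp]
  set K := (E - 1) ^ 2 with hKdef
  have hK : 0 < K := by rw [hKdef]; nlinarith [hE1]
  have hKlo : (0.4208391:ℝ) ≤ K := by rw [hKdef]; nlinarith [hE1]
  have hKhi : K ≤ (0.4208394:ℝ) := by rw [hKdef]; nlinarith [hE1, hE2]
  set x := Real.log s with hxdef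
  have key : (h * Real.log h - h + 1) * K ≤ (s - 1) ^ 2 * max 1 (Real.log h) := by
    rcases le_total (Real.log h) 1 with hc | hc
    · rw [max_eq_left hc]
      rw [hlogh, ← hs2]
      -- goal : (s^2 * (2 * x) - s^2 + 1) * K ≤ (s-1)^2 * 1
      rcases le_total s 0.65 with hr | hr
      · -- region A1 : log s ≤ s - 1
        have hlb : x ≤ s - 1 := by
          rw [hxdef]; exact Real.log_le_sub_one_of_pos hs
        have hp : 0 ≤ K * s^2 * (s - 1 - x) :=
          mul_nonneg (mul_nonneg hK.le (sq_nonneg s)) (by linarith)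
        have hK1 : (2*s + 1) * K ≤ 1 := by
          nlinarith [mul_nonneg hK.le (by linarith : (0:ℝ) ≤ 0.65 - s)]
        have hstep : 0 ≤ (s-1)^2 * (1 - (2*s+1)*K) :=
          mul_nonneg (sq_nonneg _) (by linarith)
        have hid : (s-1)^2 * 1 - (s^2 * (2*x) - s^2 + 1) * K
            = (s-1)^2 * (1 - (2*s+1)*K) + 2 * (K * s^2 * (s - 1 - x)) := by ring
        linarith [hp, hstep, hid.ge, hid.le]
      rcases le_total s 1 with hr2 | hr2
      · -- region A2 : (s+1) log s ≤ 2(s-1)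
        have hlb : (s + 1) * x ≤ 2 * (s - 1) := by
          rw [hxdef]; exact aux_tanh hr hr2
        have hp : 0 ≤ K * s^2 * (2*(s-1) - (s+1)*x) :=
          mul_nonneg (mul_nonneg hK.le (sq_nonneg s)) (by linarith)
        have hsub : (3*s + 1) * K ≤ s + 1 := by
          nlinarith [mul_nonneg (by linarith : (0:ℝ) ≤ 0.4208394 - K)
            (by linarith : (0:ℝ) ≤ 3*s + 1)]
        have hstep : 0 ≤ (s-1)^2 * ((s+1) - (3*s+1)*K) :=
          mul_nonneg (sq_nonneg _) (by linarith)
        have hmul : ((s^2 * (2*x) - s^2 + 1) * K) * (s+1) ≤ ((s-1)^2 * 1) * (s+1) := by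
          have hid : ((s-1)^2 * 1) * (s+1) - ((s^2 * (2*x) - s^2 + 1) * K) * (s+1)
              = (s-1)^2 * ((s+1) - (3*s+1)*K) + 2 * (K * s^2 * (2*(s-1) - (s+1)*x)) := by ring
          linarith [hp, hstep, hid.ge, hid.le]
        exact le_of_mul_le_mul_right hmul (by linarith)
      rcases le_total s 1.376 with hr3 | hr3
      · -- region A3 : 2 s^2 log s ≤ s^3 - s
        have hlb : 2 * s^2 * x ≤ s^3 - s := by
          rw [hxdef]; exact aux_sinh hr2
        have hp : 0 ≤ K * ((s^3 - s) - 2*s^2*x) := mul_nonneg hK.le (by linarith)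
        have hKs : (s + 1) * K ≤ 1 := by
          nlinarith [mul_nonneg (by linarith : (0:ℝ) ≤ 0.4208394 - K)
            (by linarith : (0:ℝ) ≤ s + 1)]
        have hstep : 0 ≤ (s-1)^2 * (1 - (s+1)*K) :=
          mul_nonneg (sq_nonneg _) (by linarith)
        have hid : (s-1)^2 * 1 - (s^2 * (2*x) - s^2 + 1) * K
            = (s-1)^2 * (1 - (s+1)*K) + (K * ((s^3 - s) - 2*s^2*x)) := by ring
        linarith [hp, hstep, hid.ge, hid.le]
      rcases le_total s 1.555 with hr4 | hr4
      · -- region A4 : tangent at 3/2 : log s ≤ 2s/3 - 1 + 0.4056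
        have hsplit : Real.log s = Real.log (2*s/3) + Real.log (3/2) := by
          rw [← Real.log_mul (ne_of_gt (by linarith : (0:ℝ) < 2*s/3)) (by norm_num)]
          congr 1
          ring
        have hlb : x ≤ 2*s/3 - 1 + 0.4056 := by
          have hb1 := Real.log_le_sub_one_of_pos (show (0:ℝ) < 2*s/3 by linarith)
          have hb2 := aux_log32
          rw [hxdef, hsplit]; linarith
        have hp : 0 ≤ K * s^2 * ((2*s/3 - 1 + 0.4056) - x) :=
          mul_nonneg (mul_nonneg hK.le (sq_nonneg s)) (by linarith)
        have hPpos : 0 ≤ (4/3)*s^3 - 2.1888*s^2 + 1 := by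
          nlinarith [mul_nonneg (by linarith : (0:ℝ) ≤ s - 1.376)
            (by linarith : (0:ℝ) ≤ 1.555 - s), sq_nonneg (s - 1.46)]
        have hstep : ((4/3)*s^3 - 2.1888*s^2 + 1) * K
            ≤ ((4/3)*s^3 - 2.1888*s^2 + 1) * 0.4208394 :=
          mul_le_mul_of_nonneg_left hKhi hPpos
        have hcubic : ((4/3)*s^3 - 2.1888*s^2 + 1) * 0.4208394 ≤ (s-1)^2 := by
          nlinarith [mul_nonneg (by linarith : (0:ℝ) ≤ s - 1.376)
              (by linarith : (0:ℝ) ≤ 1.555 - s),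
            mul_nonneg (mul_nonneg (by linarith : (0:ℝ) ≤ s - 1.376)
              (by linarith : (0:ℝ) ≤ 1.555 - s)) hs.le,
            sq_nonneg (s - 1.376), sq_nonneg (s - 1.555), sq_nonneg (s - 1.46)]
        have hid : (s-1)^2 * 1 - (s^2 * (2*x) - s^2 + 1) * K
            = ((s-1)^2 - ((4/3)*s^3 - 2.1888*s^2 + 1) * K)
              + 2 * (K * s^2 * ((2*s/3 - 1 + 0.4056) - x)) := by ring
        linarith [hp, hstep, hcubic, hid.ge, hid.le]
      · -- region A5 : tangent at E : E * log s ≤ s - E/2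
        have hsE : s ≤ E := by
          have hx12 : x ≤ 1/2 := by rw [hlogh] at hc; linarith
          calc s = Real.exp x := by rw [hxdef]; exact (Real.exp_log hs).symm
            _ ≤ Real.exp (1/2) := Real.exp_le_exp.mpr hx12
            _ = E := hEexp
        have hsplit : Real.log s = Real.log E + Real.log (s/E) := by
          rw [← Real.log_mul (ne_of_gt hE0) (ne_of_gt (div_pos hs hE0))]
          congr 1
          field_simp
        have hlb : E * x ≤ s - E/2 := by
          have hb1 := Real.log_le_sub_one_of_pos (div_pos hs hE0)
          have hb2 : x ≤ 1/2 + (s/E - 1) := by rw [hxdef, hsplit, hlogE]; linarith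
          have hb3 : E * x ≤ E * (1/2 + (s/E - 1)) := mul_le_mul_of_nonneg_left hb2 hE0.le
          have hb4 : E * (s/E) = s := by field_simp
          nlinarith [hb3, hb4]
        have hG4 : 0 ≤ 2*s^2*K - s*E - E^2 + 2*E := by
          nlinarith [hKlo, hE1, hE2, hr4, hsE,
            mul_nonneg (by linarith : (0:ℝ) ≤ s - 1.555) (by linarith : (0:ℝ) ≤ E - s),
            sq_nonneg (s - 1.555), sq_nonneg (E - s)]
        have hF4 : 0 ≤ E*(s-1)^2 - K*(2*s^3 - 2*E*s^2 + E) := by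
          have hid : E*(s-1)^2 - K*(2*s^3 - 2*E*s^2 + E)
              = (E - s) * (2*s^2*K - s*E - E^2 + 2*E) := by
            rw [hKdef]; ring
          rw [hid]
          exact mul_nonneg (by linarith) hG4
        have hp : 0 ≤ 2 * K * s^2 * ((s - E/2) - E*x) :=
          mul_nonneg (mul_nonneg (by linarith) (sq_nonneg s)) (by linarith)
        have hmulE : E * ((s^2 * (2*x) - s^2 + 1) * K) ≤ E * ((s-1)^2 * 1) := by
          have hid2 : E * ((s-1)^2 * 1) - E * ((s^2 * (2*x) - s^2 + 1) * K)
              = (E*(s-1)^2 - K*(2*s^3 - 2*E*s^2 + E))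
                + (2 * K * s^2 * ((s - E/2) - E*x)) := by ring
          linarith [hp, hF4, hid2.ge, hid2.le]
        exact le_of_mul_le_mul_left hmulE hE0
    · rw [max_eq_right hc]
      have hx12 : 1/2 ≤ x := by rw [hlogh] at hc; linarith
      have hsE : E ≤ s := by
        calc E = Real.exp (1/2) := hEexp.symm
          _ ≤ Real.exp x := Real.exp_le_exp.mpr hx12
          _ = s := by rw [hxdef]; exact Real.exp_log hs
      have hs1 : (1:ℝ) < s := by linarith
      rw [hlogh, ← hs2]
      -- goal : (s^2*(2x) - s^2 + 1) * K ≤ (s-1)^2 * (2x)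
      rcases le_total (K * s^2) ((s-1)^2) with hN | hN
      · have hxpos : (0:ℝ) ≤ x := by linarith
        have h2 : 0 ≤ x * ((s-1)^2 - K*s^2) := mul_nonneg hxpos (by linarith)
        have h3 : 0 ≤ K * (s^2 - 1) := mul_nonneg hK.le (by nlinarith)
        have hid : (s-1)^2 * (2*x) - (s^2*(2*x) - s^2 + 1) * K
            = 2 * (x * ((s-1)^2 - K*s^2)) + K * (s^2 - 1) := by ring
        linarith [h2, h3, hid.ge, hid.le]
      · have hsplit : Real.log s = Real.log E + Real.log (s/E) := by
          rw [← Real.log_mul (ne_of_gt hE0) (ne_of_gt (div_pos hs hE0))]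
          congr 1
          field_simp
        have hlb : E * x ≤ s - E/2 := by
          have hb1 := Real.log_le_sub_one_of_pos (div_pos hs hE0)
          have hb2 : x ≤ 1/2 + (s/E - 1) := by rw [hxdef, hsplit, hlogE]; linarith
          have hb3 : E * x ≤ E * (1/2 + (s/E - 1)) := mul_le_mul_of_nonneg_left hb2 hE0.le
          have hb4 : E * (s/E) = s := by field_simp
          nlinarith [hb3, hb4]
        have ha : (1.1583:ℝ) ≤ 2*E*(2-E) := by nlinarith [hE1, hE2]
        have hG5 : 0 ≤ 2*s^2*E*(2-E) + s*(E-4) + (E-1)^2 + 1 := by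
          nlinarith [mul_nonneg (by linarith : (0:ℝ) ≤ 2*E*(2-E) - 1.1583) (sq_nonneg s),
            mul_nonneg hs.le (by linarith : (0:ℝ) ≤ (E - 4) + 2.351279),
            sq_nonneg (s - 1.0151), hs.le, hKlo, hKdef.ge]
        have hF5 : 0 ≤ (2*s - E)*((s-1)^2 - K*s^2) + E*K*(s^2 - 1) := by
          have hid : (2*s - E)*((s-1)^2 - K*s^2) + E*K*(s^2 - 1)
              = (s - E) * (2*s^2*E*(2-E) + s*(E-4) + (E-1)^2 + 1) := by
            rw [hKdef]; ring
          rw [hid]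
          exact mul_nonneg (by linarith) hG5
        have hp : 0 ≤ ((s - E/2) - E*x) * (K*s^2 - (s-1)^2) :=
          mul_nonneg (by linarith) (by linarith)
        have hmulE : E * ((s^2*(2*x) - s^2 + 1) * K) ≤ E * ((s-1)^2 * (2*x)) := by
          have hid2 : E * ((s-1)^2 * (2*x)) - E * ((s^2*(2*x) - s^2 + 1) * K)
              = ((2*s - E)*((s-1)^2 - K*s^2) + E*K*(s^2 - 1))
                + 2 * (((s - E/2) - E*x) * (K*s^2 - (s-1)^2)) := by ring
          linarith [hp, hF5, hid2.ge, hid2.le]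
        exact le_of_mul_le_mul_left hmulE hE0
  have hfin : h * Real.log h - h + 1 ≤ (s - 1)^2 * max 1 (Real.log h) / K :=
    (le_div_iff₀ hK).mpr key
  have heq : 1/K * (s - 1)^2 * max 1 (Real.log h)
      = (s - 1)^2 * max 1 (Real.log h) / K := by ring
  rw [heq]
  exact hfin
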